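/- For all x ∈ [0,A], one has w(x;1) < 1 - γ/(γ + θ_max), where θ_max = max_{x∈[0,A]} θ(x). -/

import Mathlib

open MeasureTheory Real Set Filter

/-- `Λ(x,s) = ∫_s^x θ(t) dt`. -/
noncomputable def Lam (θ : ℝ → ℝ) (x s : ℝ) : ℝ := ∫ t in s..x, θ t

/-- `w(x;Q) = Q e^{-γx} ∫₀^x e^{γs} θ(s) e^{-Q Λ(x,s)} ds`. -/
noncomputable def w (γ : ℝ) (θ : ℝ → ℝ) (Q x : ℝ) : ℝ :=
  Q * Real.exp (-γ * x) * ∫ s in (0:ℝ)..x, Real.exp (γ * s) * θ s * Real.exp (-Q * Lam θ x s)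

/-- `w(x;1) < 1 - γ/(γ + θ_max)` for all `x ∈ [0,A]`. -/
theorem w_one_bound (γ A : ℝ) (hγ : 0 < γ) (hA : 0 < A) (θ : ℝ → ℝ)
    (hθc : ContinuousOn θ (Set.Icc 0 A)) (hθpos : ∀ x ∈ Set.Icc 0 A, 0 < θ x)
    (θmax : ℝ) (hθmax : IsGreatest (θ '' Set.Icc 0 A) θmax) :
    ∀ x ∈ Set.Icc 0 A, w γ θ 1 x < 1 - γ / (γ + θmax) := by
  -- continuous extension of θ to ℝ
  set θ' : ℝ → ℝ := Set.IccExtend hA.le ((Set.Icc 0 A).restrict θ) with hθ'def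
  have hθ'cont : Continuous θ' :=
    Continuous.Icc_extend' (continuousOn_iff_continuous_restrict.1 hθc)
  have hθ'eq : ∀ s ∈ Set.Icc 0 A, θ' s = θ s := fun s hs => by
    rw [hθ'def, Set.IccExtend_of_mem hA.le _ hs]
    rfl
  have hθmaxpos : 0 < θmax := by
    have h0 : (0:ℝ) ∈ Set.Icc 0 A := ⟨le_rfl, hA.le⟩
    exact lt_of_lt_of_le (hθpos 0 h0) (hθmax.2 ⟨0, h0, rfl⟩)
  have hden : 0 < γ + θmax := by linarith
  have hcform : 1 - γ / (γ + θmax) = θmax / (γ + θmax) := by field_simp; ring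
  intro x hx
  rw [hcform]
  set c := θmax / (γ + θmax) with hcdef
  have hcpos : 0 < c := div_pos hθmaxpos hden
  have hx0 : (0:ℝ) ≤ x := hx.1
  have hsub : ∀ s ∈ Set.Icc (0:ℝ) x, s ∈ Set.Icc 0 A :=
    fun s hs => ⟨hs.1, hs.2.trans hx.2⟩
  -- primitive of θ'
  set G : ℝ → ℝ := fun s => ∫ t in (0:ℝ)..s, θ' t with hGdef
  have hGderiv : ∀ s : ℝ, HasDerivAt G (θ' s) s := fun s =>
    (hθ'cont.integral_hasStrictDerivAt 0 s).hasDerivAt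
  have hGcont : Continuous G :=
    continuous_iff_continuousAt.2 fun s => (hGderiv s).continuousAt
  -- Lam in terms of G
  have hLam : ∀ s ∈ Set.Icc (0:ℝ) x, Lam θ x s = G x - G s := by
    intro s hs
    have h1 : Lam θ x s = ∫ t in s..x, θ' t := by
      refine intervalIntegral.integral_congr fun t ht => ?_
      rw [Set.uIcc_of_le hs.2] at ht
      exact (hθ'eq t (hsub t ⟨hs.1.trans ht.1, ht.2⟩)).symm
    rw [h1, hGdef]
    exact (intervalIntegral.integral_interval_sub_left
      (hθ'cont.intervalIntegrable 0 x) (hθ'cont.intervalIntegrable 0 s)).symm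
  -- the integrand functions
  set f : ℝ → ℝ := fun s => Real.exp (γ * s) * θ' s * Real.exp (G s - G x) with hfdef
  set g : ℝ → ℝ := fun s => c * ((γ + θ' s) * Real.exp (γ * s + G s - G x)) with hgdef
  have hfcont : Continuous f := by fun_prop
  have hgcont : Continuous g := by fun_prop
  -- identify the integral in w with ∫ f
  have hI : (∫ s in (0:ℝ)..x, Real.exp (γ * s) * θ s * Real.exp (-1 * Lam θ x s))
      = ∫ s in (0:ℝ)..x, f s := by
    refine intervalIntegral.integral_congr fun s hs => ?_
    rw [Set.uIcc_of_le hx0] at hs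
    rw [hfdef]
    simp only
    rw [hθ'eq s (hsub s hs), hLam s hs]
    ring_nf
  -- pointwise bound f ≤ g
  have hfg : ∀ s ∈ Set.Icc (0:ℝ) x, f s ≤ g s := by
    intro s hs
    have hsA := hsub s hs
    have hθs : θ' s = θ s := hθ'eq s hsA
    have hθpos' : 0 < θ' s := hθs ▸ hθpos s hsA
    have hθle : θ' s ≤ θmax := hθs ▸ hθmax.2 ⟨s, hsA, rfl⟩
    have key : θ' s ≤ c * (γ + θ' s) := by
      rw [hcdef, div_mul_eq_mul_div, le_div_iff₀ hden]
      nlinarith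
    have hexp : Real.exp (γ * s) * Real.exp (G s - G x)
        = Real.exp (γ * s + G s - G x) := by
      rw [← Real.exp_add]; ring_nf
    calc f s = θ' s * (Real.exp (γ * s) * Real.exp (G s - G x)) := by rw [hfdef]; ring
      _ ≤ c * (γ + θ' s) * (Real.exp (γ * s) * Real.exp (G s - G x)) := by
          exact mul_le_mul_of_nonneg_right key (by positivity)
      _ = g s := by rw [hgdef, hexp]; ring
  -- FTC for g
  have hFderiv : ∀ s ∈ Set.uIcc (0:ℝ) x,
      HasDerivAt (fun u => Real.exp (γ * u + G u - G x))
        ((γ + θ' s) * Real.exp (γ * s + G s - G x)) s := by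
    intro s _
    have hu : HasDerivAt (fun u => γ * u + G u - G x) (γ + θ' s) s := by
      simpa using (((hasDerivAt_id s).const_mul γ).add (hGderiv s)).sub_const (G x)
    simpa [mul_comm] using hu.exp
  have hG0 : G 0 = 0 := intervalIntegral.integral_same
  have hInt : (∫ s in (0:ℝ)..x, (γ + θ' s) * Real.exp (γ * s + G s - G x))
      = Real.exp (γ * x) - Real.exp (-G x) := by
    have hcont2 : Continuous fun s => (γ + θ' s) * Real.exp (γ * s + G s - G x) := by fun_prop
    rw [intervalIntegral.integral_eq_sub_of_hasDerivAt hFderiv (hcont2.intervalIntegrable 0 x)]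
    rw [hG0]
    ring_nf
  have hgInt : (∫ s in (0:ℝ)..x, g s) = c * (Real.exp (γ * x) - Real.exp (-G x)) := by
    rw [hgdef]
    rw [intervalIntegral.integral_const_mul, hInt]
  -- put it together
  have hbound : (∫ s in (0:ℝ)..x, f s) < c * Real.exp (γ * x) := by
    calc (∫ s in (0:ℝ)..x, f s) ≤ ∫ s in (0:ℝ)..x, g s :=
          intervalIntegral.integral_mono_on hx0 (hfcont.intervalIntegrable 0 x)
            (hgcont.intervalIntegrable 0 x) hfg
      _ = c * (Real.exp (γ * x) - Real.exp (-G x)) := hgInt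
      _ < c * Real.exp (γ * x) := by
          have := Real.exp_pos (-G x)
          nlinarith
  have hw : w γ θ 1 x = Real.exp (-γ * x) * ∫ s in (0:ℝ)..x, f s := by
    rw [w, one_mul, hI]
  rw [hw]
  calc Real.exp (-γ * x) * ∫ s in (0:ℝ)..x, f s
      < Real.exp (-γ * x) * (c * Real.exp (γ * x)) := by
        exact mul_lt_mul_of_pos_left hbound (Real.exp_pos _)
    _ = c := by
        rw [show Real.exp (-γ * x) * (c * Real.exp (γ * x))
            = c * (Real.exp (-γ * x) * Real.exp (γ * x)) by ring, ← Real.exp_add]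
        simp
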